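/- For n ≥ 1, let Σ_k = {(x,t) ∈ ℝ^n × (0,∞) : t = 2^{-k}, |x| ≥ 2^{-k}} for k ≥ 1, and let Ω = ℝ^{n+1}_+ \ ⋃_{k≥1} Σ_k. Then Ω is open and connected, and its boundary ∂Ω = (ℝ^n × {0}) ∪ ⋃_{k≥1} Σ_k does not have locally finite H^n-measure: every ball centered at a point of ℝ^n × {0} has infinite H^n(∂Ω ∩ B). -/

import Mathlib

open Metric MeasureTheory Set Filter
open scoped Topology

noncomputable section

/-- The sheet `Σ_k = {(x,t) : t = 2^{-k}, |x| ≥ 2^{-k}}` in `ℝ^n × ℝ`. -/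
def sheet (n k : ℕ) : Set (EuclideanSpace ℝ (Fin n) × ℝ) :=
  {p | p.2 = ((2 : ℝ) ^ k)⁻¹ ∧ ((2 : ℝ) ^ k)⁻¹ ≤ ‖p.1‖}

/-- The domain `Ω = ℝ^{n+1}_+ \ ⋃_{k ≥ 1} Σ_k`. -/
def sheetDomain (n : ℕ) : Set (EuclideanSpace ℝ (Fin n) × ℝ) :=
  {p : EuclideanSpace ℝ (Fin n) × ℝ | 0 < p.2} \ ⋃ k : ℕ, sheet n (k + 1)

namespace SheetAux

/-- height of the k-th sheet -/
def hgt (k : ℕ) : ℝ := ((2 : ℝ) ^ (k+1))⁻¹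

lemma hgt_pos (k : ℕ) : 0 < hgt k := by
  unfold hgt; positivity

lemma hgt_anti : StrictAnti hgt := by
  intro i j hij
  unfold hgt
  exact inv_strictAnti₀ (by positivity) (by
    exact pow_lt_pow_right₀ one_lt_two (by omega))

lemma hgt_le_hgt {i j : ℕ} (h : i ≤ j) : hgt j ≤ hgt i := by
  rcases eq_or_lt_of_le h with rfl | h
  · exact le_refl _
  · exact (hgt_anti h).le

lemma hgt_succ (k : ℕ) : hgt (k+1) = hgt k / 2 := by
  unfold hgt
  rw [pow_succ]
  field_simp

lemma mem_sheet_iff {n : ℕ} (k : ℕ) (p : EuclideanSpace ℝ (Fin n) × ℝ) :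
    p ∈ sheet n (k+1) ↔ p.2 = hgt k ∧ hgt k ≤ ‖p.1‖ := Iff.rfl

/-- The gap lemma: if `t > 0` differs from all heights, it is uniformly away from them. -/
lemma gap_of_ne {t : ℝ} (ht : 0 < t) (h : ∀ k : ℕ, t ≠ hgt k) :
    ∃ δ > 0, ∀ k : ℕ, δ ≤ |t - hgt k| := by
  obtain ⟨N, hN⟩ : ∃ N : ℕ, hgt N < t := by
    obtain ⟨N, hN⟩ := exists_pow_lt_of_lt_one ht (by norm_num : (1/2 : ℝ) < 1)
    refine ⟨N, lt_of_le_of_lt ?_ hN⟩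
    unfold hgt
    rw [one_div, ← inv_pow]
    exact pow_le_pow_of_le_one (by norm_num) (by norm_num) (by omega)
  set δ := (Finset.range (N+1)).inf' (by simp) (fun k => |t - hgt k|) with hδ
  refine ⟨δ, ?_, ?_⟩
  · rw [hδ, gt_iff_lt, Finset.lt_inf'_iff]
    intro k _
    exact abs_pos.2 (sub_ne_zero.2 (h k))
  · intro k
    rcases le_or_gt k N with hk | hk
    · exact Finset.inf'_le _ (Finset.mem_range.2 (by omega))
    · have h1 : hgt k ≤ hgt N := hgt_le_hgt hk.le
      have h2 : δ ≤ |t - hgt N| := Finset.inf'_le _ (Finset.mem_range.2 (by omega))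
      have h3 : |t - hgt N| = t - hgt N := abs_of_pos (by linarith)
      have : 0 < t - hgt k := by linarith
      rw [abs_of_pos this]
      linarith [h2.trans h3.le]

/-- The gap lemma at a height: `hgt k` is uniformly away from all other heights. -/
lemma gap_at (k : ℕ) : ∀ j : ℕ, j ≠ k → hgt (k+1) ≤ |hgt k - hgt j| := by
  intro j hj
  rcases lt_or_gt_of_ne hj with hjk | hjk
  · -- j < k, so hgt j ≥ hgt (k-1) = 2 * hgt k
    have h1 : hgt k ≤ hgt j := hgt_le_hgt (by omega)
    have h2 : hgt (j+1) = hgt j / 2 := hgt_succ j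
    have h3 : hgt k ≤ hgt (j+1) := hgt_le_hgt (by omega)
    have h4 : hgt (k+1) = hgt k / 2 := hgt_succ k
    have h5 : 0 < hgt k := hgt_pos k
    rw [abs_sub_comm, abs_of_pos (by linarith [hgt_anti hjk])]
    linarith
  · -- j > k
    have h3 : hgt j ≤ hgt (k+1) := hgt_le_hgt (by omega)
    have h4 : hgt (k+1) = hgt k / 2 := hgt_succ k
    rw [abs_of_pos (by linarith [hgt_anti hjk, hgt_pos j])]
    linarith [hgt_pos j]

end SheetAux

namespace SheetAux

lemma not_mem_sheets_iff {n : ℕ} (p : EuclideanSpace ℝ (Fin n) × ℝ) :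
    p ∉ (⋃ k : ℕ, sheet n (k+1)) ↔ ∀ k : ℕ, ¬ (p.2 = hgt k ∧ hgt k ≤ ‖p.1‖) := by
  simp only [mem_iUnion, not_exists]
  rfl

lemma isOpen_sheetDomain (n : ℕ) : IsOpen (sheetDomain n) := by
  rw [Metric.isOpen_iff]
  rintro p ⟨ht, hs⟩
  rw [not_mem_sheets_iff] at hs
  simp only [Set.mem_setOf_eq] at ht
  by_cases hex : ∃ k, p.2 = hgt k
  · obtain ⟨k, hk⟩ := hex
    have hx : ‖p.1‖ < hgt k := by
      by_contra hx; push_neg at hx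
      exact hs k ⟨hk, hx⟩
    refine ⟨min (hgt (k+1)) (min p.2 (hgt k - ‖p.1‖)),
      lt_min (hgt_pos _) (lt_min ht (by linarith)), ?_⟩
    rintro q hq
    rw [mem_ball, Prod.dist_eq, max_lt_iff] at hq
    obtain ⟨hq1, hq2⟩ := hq
    have hq2a : |q.2 - p.2| < min (hgt (k+1)) (min p.2 (hgt k - ‖p.1‖)) := by
      rwa [Real.dist_eq] at hq2
    have hq2b : |q.2 - p.2| < p.2 := lt_of_lt_of_le hq2a (le_trans (min_le_right _ _) (min_le_left _ _))
    constructor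
    · simp only [Set.mem_setOf_eq]
      cases abs_lt.1 hq2b with
      | intro h1 h2 => linarith
    · rw [not_mem_sheets_iff]
      rintro j ⟨hj1, hj2⟩
      rcases eq_or_ne j k with rfl | hjk
      · -- same sheet: norm too small
        have h1 : ‖q.1‖ - ‖p.1‖ ≤ ‖q.1 - p.1‖ := norm_sub_norm_le _ _
        have h2 : ‖q.1 - p.1‖ < hgt j - ‖p.1‖ := by
          rw [← dist_eq_norm]
          exact lt_of_lt_of_le hq1 (le_trans (min_le_right _ _) (min_le_right _ _))
        linarith
      · have h1 : hgt (k+1) ≤ |hgt k - hgt j| := gap_at k j hjk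
        have h2 : |q.2 - p.2| = |hgt k - hgt j| := by
          rw [hj1, hk, abs_sub_comm]
        have h3 : |q.2 - p.2| < hgt (k+1) := lt_of_lt_of_le hq2a (min_le_left _ _)
        linarith
  · push_neg at hex
    obtain ⟨δ, hδ, hgap⟩ := gap_of_ne ht hex
    refine ⟨min δ p.2, lt_min hδ ht, ?_⟩
    rintro q hq
    rw [mem_ball, Prod.dist_eq, max_lt_iff] at hq
    obtain ⟨hq1, hq2⟩ := hq
    have hq2a : |q.2 - p.2| < min δ p.2 := by rwa [Real.dist_eq] at hq2
    constructor
    · simp only [Set.mem_setOf_eq]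
      have := lt_of_lt_of_le hq2a (min_le_right _ _)
      cases abs_lt.1 this with
      | intro h1 h2 => linarith
    · rw [not_mem_sheets_iff]
      rintro j ⟨hj1, _⟩
      have h1 : δ ≤ |p.2 - hgt j| := hgap j
      have h2 : |q.2 - p.2| = |p.2 - hgt j| := by rw [hj1, abs_sub_comm]
      have h3 : |q.2 - p.2| < δ := lt_of_lt_of_le hq2a (min_le_left _ _)
      linarith

end SheetAux

namespace SheetAux

lemma joinedIn_of_segment {n : ℕ} {a b : EuclideanSpace ℝ (Fin n) × ℝ}
    (h : segment ℝ a b ⊆ sheetDomain n) : JoinedIn (sheetDomain n) a b :=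
  (((convex_segment a b).isPathConnected ⟨a, left_mem_segment ℝ a b⟩).joinedIn a
    (left_mem_segment ℝ a b) b (right_mem_segment ℝ a b)).mono h

lemma basept_mem (n : ℕ) : ((0 : EuclideanSpace ℝ (Fin n)), (1:ℝ)) ∈ sheetDomain n := by
  constructor
  · simp only [Set.mem_setOf_eq]; norm_num
  · rw [not_mem_sheets_iff]
    rintro k ⟨hk, _⟩
    have h1 : hgt k ≤ hgt 0 := hgt_le_hgt (Nat.zero_le k)
    have h0 : hgt 0 = 2⁻¹ := by norm_num [hgt]
    simp only at hk
    rw [h0] at h1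
    norm_num [hk] at h1
    linarith

lemma isConnected_sheetDomain (n : ℕ) : IsConnected (sheetDomain n) := by
  have hpc : IsPathConnected (sheetDomain n) := by
    rw [isPathConnected_iff]
    refine ⟨⟨_, basept_mem n⟩, ?_⟩
    have key : ∀ p ∈ sheetDomain n,
        JoinedIn (sheetDomain n) p ((0 : EuclideanSpace ℝ (Fin n)), (1:ℝ)) := by
      rintro p hp
      obtain ⟨hp1, hp2⟩ := hp
      simp only [Set.mem_setOf_eq] at hp1
      rw [not_mem_sheets_iff] at hp2
      have step1 : JoinedIn (sheetDomain n) p ((0 : EuclideanSpace ℝ (Fin n)), p.2) := by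
        apply joinedIn_of_segment
        rintro z ⟨u, v, hu, hv, huv, rfl⟩
        have hz2 : (u • p + v • ((0 : EuclideanSpace ℝ (Fin n)), p.2)).2 = p.2 := by
          simp only [Prod.snd_add, Prod.smul_snd, smul_eq_mul]
          nlinarith
        have hz1 : (u • p + v • ((0 : EuclideanSpace ℝ (Fin n)), p.2)).1 = u • p.1 := by
          simp only [Prod.fst_add, Prod.smul_fst, smul_zero, add_zero]
        constructor
        · simp only [Set.mem_setOf_eq, hz2]; exact hp1
        · rw [not_mem_sheets_iff]
          rintro j ⟨hj1, hj2⟩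
          rw [hz2] at hj1
          have hx : ‖p.1‖ < hgt j := by
            by_contra hx; push_neg at hx
            exact hp2 j ⟨hj1, hx⟩
          rw [hz1, norm_smul, Real.norm_eq_abs, abs_of_nonneg hu] at hj2
          nlinarith [norm_nonneg p.1, hgt_pos j]
      have step2 : JoinedIn (sheetDomain n)
          ((0 : EuclideanSpace ℝ (Fin n)), p.2) ((0 : EuclideanSpace ℝ (Fin n)), (1:ℝ)) := by
        apply joinedIn_of_segment
        rintro z ⟨u, v, hu, hv, huv, rfl⟩
        constructor
        · simp only [Set.mem_setOf_eq, Prod.snd_add, Prod.smul_snd, smul_eq_mul, mul_one]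
          rcases hv.lt_or_eq with h | h
          · nlinarith [mul_nonneg hu hp1.le]
          · nlinarith [mul_nonneg hu hp1.le, hp1]
        · rw [not_mem_sheets_iff]
          rintro j ⟨_, hj2⟩
          simp only [Prod.fst_add, Prod.smul_fst, smul_zero, add_zero, norm_zero] at hj2
          linarith [hgt_pos j]
      exact step1.trans step2
    intro x hx y hy
    exact (key x hx).trans (key y hy).symm
  exact hpc.isConnected

end SheetAux

namespace SheetAux

lemma pos_of_mem_sheets {n : ℕ} {p : EuclideanSpace ℝ (Fin n) × ℝ}
    (hp : p ∈ ⋃ k : ℕ, sheet n (k+1)) : 0 < p.2 := by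
  simp only [mem_iUnion] at hp
  obtain ⟨k, hk, _⟩ := hp
  rw [show p.2 = hgt k from hk]
  exact hgt_pos k

lemma closure_sheetDomain (n : ℕ) :
    closure (sheetDomain n) = {p : EuclideanSpace ℝ (Fin n) × ℝ | 0 ≤ p.2} := by
  apply subset_antisymm
  · have hcl : IsClosed {p : EuclideanSpace ℝ (Fin n) × ℝ | 0 ≤ p.2} :=
      isClosed_le continuous_const continuous_snd
    refine closure_minimal ?_ hcl
    rintro p ⟨hp, _⟩
    simp only [Set.mem_setOf_eq] at hp ⊢
    exact hp.le
  · rintro p hp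
    simp only [Set.mem_setOf_eq] at hp
    rw [Metric.mem_closure_iff]
    intro ε hε
    have hcount : (Set.range hgt).Countable := Set.countable_range _
    have hne : ((Set.Ioo p.2 (p.2+ε)) \ Set.range hgt).Nonempty := by
      by_contra h
      rw [Set.not_nonempty_iff_eq_empty, Set.diff_eq_empty] at h
      have h1 := measure_mono (μ := volume) h
      rw [Real.volume_Ioo, hcount.measure_zero volume, nonpos_iff_eq_zero,
        ENNReal.ofReal_eq_zero] at h1
      linarith
    obtain ⟨s, ⟨hs1, hs2⟩, hs3⟩ := hne
    refine ⟨(p.1, s), ⟨?_, ?_⟩, ?_⟩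
    · exact lt_of_le_of_lt hp hs1
    · rw [not_mem_sheets_iff]
      rintro k ⟨hk, _⟩
      exact hs3 ⟨k, hk.symm⟩
    · rw [Prod.dist_eq]
      simp only [dist_self, Real.dist_eq]
      rw [max_lt_iff]
      constructor
      · exact hε
      · rw [abs_of_nonpos (by linarith)]
        linarith

lemma frontier_sheetDomain (n : ℕ) :
    frontier (sheetDomain n)
      = ({p : EuclideanSpace ℝ (Fin n) × ℝ | p.2 = 0} ∪ ⋃ k : ℕ, sheet n (k + 1)) := by
  rw [(isOpen_sheetDomain n).frontier_eq, closure_sheetDomain]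
  ext p
  simp only [Set.mem_diff, Set.mem_setOf_eq, Set.mem_union, sheetDomain, Set.mem_setOf_eq]
  constructor
  · rintro ⟨h1, h2⟩
    by_cases hc : p ∈ ⋃ k : ℕ, sheet n (k+1)
    · exact Or.inr hc
    · left
      by_contra h0
      exact h2 ⟨lt_of_le_of_ne h1 (Ne.symm h0), hc⟩
  · rintro (h | h)
    · refine ⟨le_of_eq h.symm, ?_⟩
      rintro ⟨h1, _⟩
      rw [h] at h1
      exact lt_irrefl 0 h1
    · refine ⟨(pos_of_mem_sheets h).le, ?_⟩
      rintro ⟨_, h2⟩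
      exact h2 h

end SheetAux

namespace SheetAux

lemma exists_hgt_lt {t : ℝ} (ht : 0 < t) : ∃ N : ℕ, hgt N < t := by
  obtain ⟨N, hN⟩ := exists_pow_lt_of_lt_one ht (by norm_num : (1/2 : ℝ) < 1)
  refine ⟨N, lt_of_le_of_lt ?_ hN⟩
  unfold hgt
  rw [one_div, ← inv_pow]
  exact pow_le_pow_of_le_one (by norm_num) (by norm_num) (by omega)

lemma hgt_injective : Function.Injective hgt := hgt_anti.injective

/-- The embedding `x ↦ (x, h)` is an isometry. -/
lemma isometry_pair {n : ℕ} (h : ℝ) :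
    Isometry (fun x : EuclideanSpace ℝ (Fin n) => (x, h)) := by
  intro x y
  simp [Prod.edist_eq, edist_self]

lemma annulus_nonempty {n : ℕ} (hn : 1 ≤ n) (x₀ : EuclideanSpace ℝ (Fin n)) {r : ℝ}
    (hr : 0 < r) : (ball x₀ (r/2) \ closedBall 0 (r/4)).Nonempty := by
  set e₀ : EuclideanSpace ℝ (Fin n) := EuclideanSpace.single ⟨0, hn⟩ 1 with he₀
  have he₀n : ‖e₀‖ = 1 := by
    rw [he₀, EuclideanSpace.norm_single, norm_one]
  obtain ⟨e, hen, hinner⟩ : ∃ e : EuclideanSpace ℝ (Fin n),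
      ‖e‖ = 1 ∧ (0:ℝ) ≤ inner ℝ x₀ e := by
    rcases le_or_gt (0:ℝ) (inner ℝ x₀ e₀) with h | h
    · exact ⟨e₀, he₀n, h⟩
    · refine ⟨-e₀, by simp [he₀n], ?_⟩
      rw [inner_neg_right]
      linarith
  refine ⟨x₀ + (3*r/8) • e, ?_, ?_⟩
  · rw [mem_ball, dist_eq_norm]
    have h9 : x₀ + (3*r/8) • e - x₀ = (3*r/8) • e := by abel
    rw [h9, norm_smul, Real.norm_eq_abs, hen, mul_one, abs_of_pos (by linarith)]
    linarith
  · rw [mem_closedBall, dist_zero_right, not_le]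
    have hsq : ‖x₀ + (3*r/8) • e‖^2
        = ‖x₀‖^2 + 2 * inner ℝ x₀ ((3*r/8) • e) + ‖(3*r/8) • e‖^2 :=
      norm_add_sq_real x₀ ((3*r/8) • e)
    have hi : (inner ℝ x₀ ((3*r/8) • e) : ℝ) = (3*r/8) * inner ℝ x₀ e :=
      real_inner_smul_right x₀ e _
    have hns : ‖(3*r/8) • e‖ = 3*r/8 := by
      rw [norm_smul, Real.norm_eq_abs, hen, mul_one, abs_of_pos (by linarith)]
    rw [hi, hns] at hsq
    nlinarith [norm_nonneg (x₀ + (3*r/8) • e), sq_nonneg ‖x₀‖, norm_nonneg x₀]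

open scoped ENNReal in
lemma measure_infinite {n : ℕ} (hn : 1 ≤ n) (p : EuclideanSpace ℝ (Fin n) × ℝ)
    (hp : p.2 = 0) (r : ℝ) (hr : 0 < r) :
    μH[(n : ℝ)] (frontier (sheetDomain n) ∩ ball p r) = ⊤ := by
  obtain ⟨K, hK⟩ := exists_hgt_lt (show (0:ℝ) < r/4 by linarith)
  set A : Set (EuclideanSpace ℝ (Fin n)) := ball p.1 (r/2) \ closedBall 0 (r/4) with hA
  have hAopen : IsOpen A := isOpen_ball.sdiff isClosed_closedBall
  have hAne : A.Nonempty := annulus_nonempty hn p.1 hr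
  -- H^n of A is positive
  have hA_pos : 0 < μH[(n : ℝ)] A := by
    have hfr : ((n : ℕ) : ℝ)
        = ((Module.finrank ℝ (EuclideanSpace ℝ (Fin n)) : ℕ) : ℝ) := by
      rw [finrank_euclideanSpace_fin]
    rw [hfr]
    exact hAopen.measure_pos _ hAne
  set S : ℕ → Set (EuclideanSpace ℝ (Fin n) × ℝ) :=
    fun k => A ×ˢ ({hgt (K + k)} : Set ℝ) with hS
  have hSim : ∀ k, S k = (fun x : EuclideanSpace ℝ (Fin n) => (x, hgt (K + k))) '' A := by
    intro k
    ext z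
    simp only [hS, Set.mem_prod, Set.mem_singleton_iff, Set.mem_image]
    constructor
    · rintro ⟨h1, h2⟩
      exact ⟨z.1, h1, by rw [← h2]⟩
    · rintro ⟨x, hx, rfl⟩
      exact ⟨hx, rfl⟩
  have hSmeas : ∀ k, μH[(n : ℝ)] (S k) = μH[(n : ℝ)] A := by
    intro k
    rw [hSim k]
    exact (isometry_pair (hgt (K + k))).hausdorffMeasure_image
      (Or.inl (by positivity)) A
  have hSsub : ∀ k, S k ⊆ frontier (sheetDomain n) ∩ ball p r := by
    intro k z hz
    rw [hS, Set.mem_prod, Set.mem_singleton_iff] at hz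
    obtain ⟨⟨hz1, hz2⟩, hz3⟩ := hz
    have hzb : r/4 < ‖z.1‖ := by
      rw [mem_closedBall, dist_zero_right, not_le] at hz2
      exact hz2
    have hhk : hgt (K + k) ≤ r/4 := le_of_lt (lt_of_le_of_lt (hgt_le_hgt (by omega)) hK)
    constructor
    · rw [frontier_sheetDomain]
      right
      rw [mem_iUnion]
      refine ⟨K + k, hz3, ?_⟩
      show hgt (K + k) ≤ ‖z.1‖
      linarith
    · rw [mem_ball, Prod.dist_eq, max_lt_iff]
      constructor
      · rw [mem_ball] at hz1
        exact lt_of_lt_of_le hz1 (by linarith)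
      · rw [Real.dist_eq, hp, sub_zero, hz3, abs_of_pos (hgt_pos _)]
        linarith
  have hdisj : Pairwise (Function.onFun Disjoint S) := by
    intro i j hij
    rw [Function.onFun, Set.disjoint_left]
    rintro z hzi hzj
    rw [hS, Set.mem_prod, Set.mem_singleton_iff] at hzi hzj
    have h1 : hgt (K + i) = hgt (K + j) := hzi.2.symm.trans hzj.2
    have h2 := hgt_injective h1
    omega
  have hmeas : ∀ k, MeasurableSet (S k) :=
    fun k => hAopen.measurableSet.prod (measurableSet_singleton _)
  rw [eq_top_iff]
  calc (⊤ : ℝ≥0∞) = ∑' _ : ℕ, μH[(n : ℝ)] A :=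
        (ENNReal.tsum_const_eq_top_of_ne_zero hA_pos.ne').symm
    _ = ∑' k, μH[(n : ℝ)] (S k) := by simp_rw [hSmeas]
    _ = μH[(n : ℝ)] (⋃ k, S k) := (measure_iUnion hdisj hmeas).symm
    _ ≤ μH[(n : ℝ)] (frontier (sheetDomain n) ∩ ball p r) :=
        measure_mono (iUnion_subset hSsub)

end SheetAux

/-- Example 5.2: `Ω` is open and connected, its boundary is
`(ℝ^n × {0}) ∪ ⋃_{k ≥ 1} Σ_k`, and `H^n ⌞ ∂Ω` is not locally finite: every ball
centered at a point of `ℝ^n × {0}` has infinite `H^n` boundary measure. -/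
theorem stmt13 {n : ℕ} (hn : 1 ≤ n) :
    IsOpen (sheetDomain n) ∧ IsConnected (sheetDomain n) ∧
    frontier (sheetDomain n)
      = ({p : EuclideanSpace ℝ (Fin n) × ℝ | p.2 = 0} ∪ ⋃ k : ℕ, sheet n (k + 1)) ∧
    ∀ p : EuclideanSpace ℝ (Fin n) × ℝ, p.2 = 0 → ∀ r : ℝ, 0 < r →
      μH[(n : ℝ)] (frontier (sheetDomain n) ∩ ball p r) = ⊤ := by
  exact ⟨SheetAux.isOpen_sheetDomain n, SheetAux.isConnected_sheetDomain n,
    SheetAux.frontier_sheetDomain n,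
    fun p hp r hr => SheetAux.measure_infinite hn p hp r hr⟩
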